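/- arXiv:1010.3570 — 2 statements merged into one kernel-verified Lean document; each statement's English description precedes it below -/
import Mathlib

section
/- For each integer k ≥ 2, the first moment of the density ν_k(x) = (1/(2π))·√(4k(k−1)x − k²x²)/(kx − x²) on (0, 4(k−1)/k) equals 1. -/
open Real MeasureTheory

noncomputable def nuF (K x : ℝ) : ℝ :=
  K / (2 * π) * (-Real.sqrt (4 * (K - 1) / K * x - x ^ 2)
    + (K - (4 * (K - 1) / K) / 2) * Real.arcsin (2 * x / (4 * (K - 1) / K) - 1)
    - (K - 2) * Real.arcsin (((2 * K - 4 * (K - 1) / K) * x - K * (4 * (K - 1) / K))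
        / ((4 * (K - 1) / K) * (K - x))))

theorem nuF_hasDeriv (K : ℝ) (hK : 2 ≤ K) {x : ℝ} (hx : x ∈ Set.Ioo (0:ℝ) (4*(K-1)/K)) :
    HasDerivAt (nuF K) (K / (2*π) * (Real.sqrt (4*(K-1)/K*x - x^2) / (K - x))) x := by
  obtain ⟨hx0, hxa⟩ := hx
  set a : ℝ := 4*(K-1)/K with ha
  have hK0 : (0:ℝ) < K := by linarith
  have haK4 : a * K = 4*(K-1) := by rw [ha]; field_simp
  have ha0 : 0 < a := by apply div_pos (by linarith) hK0
  have haK : a ≤ K := by rw [ha, div_le_iff₀ hK0]; nlinarith [sq_nonneg (K-2)]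
  have hxK : x < K := lt_of_lt_of_le hxa haK
  have hKx : 0 < K - x := by linarith
  have hp : 0 < a*x - x^2 := by nlinarith
  set s : ℝ := Real.sqrt (a*x - x^2) with hs
  have hs0 : 0 < s := Real.sqrt_pos.mpr hp
  have hs2 : s^2 = a*x - x^2 := Real.sq_sqrt hp.le
  -- first term: -sqrt
  have h1 : HasDerivAt (fun y : ℝ => -Real.sqrt (a*y - y^2)) (-((a - 2*x)/(2*s))) x := by
    have hpoly : HasDerivAt (fun y : ℝ => a*y - y^2) (a - 2*x) x := by
      have h := ((hasDerivAt_id x).const_mul a).sub (hasDerivAt_pow 2 x)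
      convert h using 1 <;> (try rfl) <;> push_cast <;> ring
    exact (hpoly.sqrt (ne_of_gt hp)).neg
  -- second term
  have h2 : HasDerivAt (fun y : ℝ => (K - a/2) * Real.arcsin (2*y/a - 1))
      ((K - a/2) / s) x := by
    have hinner : HasDerivAt (fun y : ℝ => 2*y/a - 1) (2/a) x := by
      have h := (((hasDerivAt_id x).const_mul 2).div_const a).sub_const 1
      simpa using h
    have hne1 : 2*x/a - 1 ≠ -1 := by
      have h : 0 < 2*x/a := by positivity
      intro he; linarith
    have hne2 : 2*x/a - 1 ≠ 1 := by
      have h : 2*x/a < 2 := by rw [div_lt_iff₀ ha0]; linarith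
      intro he; linarith
    have harc := (Real.hasDerivAt_arcsin hne1 hne2).comp x hinner
    have hsqrt : Real.sqrt (1 - (2*x/a - 1)^2) = 2/a * s := by
      rw [show 1 - (2*x/a - 1)^2 = (2/a)^2 * (a*x - x^2) by field_simp; ring,
        Real.sqrt_mul (by positivity), Real.sqrt_sq (by positivity)]
    have := harc.const_mul (K - a/2)
    convert this using 1 <;> try rfl
    rw [hsqrt]
    field_simp
  -- third term
  have h3 : HasDerivAt (fun y : ℝ => (K - 2) * Real.arcsin (((2*K - a)*y - K*a)/(a*(K-y))))
      ((K - 2)^2 / ((K - x)*s)) x := by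
    rcases eq_or_lt_of_le hK with hK2 | hK2
    · have hfun : (fun y : ℝ => (K - 2) * Real.arcsin (((2*K - a)*y - K*a)/(a*(K-y)))) = fun _ => 0 := by
        funext y; rw [← hK2]; ring
      rw [hfun, ← hK2]
      simpa using hasDerivAt_const x (0:ℝ)
    · have hKa : a < K := by
        have h2K : (0:ℝ) < K - 2 := by linarith
        rw [ha, div_lt_iff₀ hK0]; nlinarith
      have h2K : (0:ℝ) < K - 2 := by linarith
      have hD : a*(K-x) ≠ 0 := by positivity
      have hnum : HasDerivAt (fun y : ℝ => (2*K - a)*y - K*a) (2*K - a) x := by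
        simpa using ((hasDerivAt_id x).const_mul (2*K - a)).sub_const (K*a)
      have hden : HasDerivAt (fun y : ℝ => a*(K - y)) (-a) x := by
        simpa using ((hasDerivAt_id x).const_sub K).const_mul a
      have hpsi := hnum.div hden hD
      set ψ : ℝ := ((2*K - a)*x - K*a)/(a*(K-x)) with hψ
      have hpsisq : 1 - ψ^2 = (2*(K-2)*s/(a*(K-x)))^2 := by
        rw [hψ]
        field_simp
        linear_combination (-4*(K-2)^2) * hs2 - 4*x*(a-x) * haK4
      have hpos1 : 0 < 1 - ψ^2 := by rw [hpsisq]; positivity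
      have hne1' : ψ ≠ -1 := by intro h; rw [h] at hpos1; norm_num at hpos1
      have hne2' : ψ ≠ 1 := by intro h; rw [h] at hpos1; norm_num at hpos1
      have harc := ((Real.hasDerivAt_arcsin hne1' hne2').comp x hpsi).const_mul (K-2)
      convert harc using 1 <;> try rfl
      rw [hpsisq, Real.sqrt_sq (by positivity)]
      field_simp
      linear_combination 2 * haK4
  have hsum := ((h1.add h2).sub h3).const_mul (K/(2*π))
  have hfun : (fun y : ℝ => K/(2*π) * (-Real.sqrt (a*y - y^2) + (K - a/2) * Real.arcsin (2*y/a - 1)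
      - (K - 2) * Real.arcsin (((2*K - a)*y - K*a)/(a*(K-y))))) = nuF K := by
    funext y; rw [nuF, ha]
  rw [← hfun]
  convert hsum using 1 <;> try rfl
  have hπ : (2*π) ≠ 0 := by positivity
  field_simp
  linear_combination 2 * hs2 + 2 * haK4

theorem nuF_diff (K : ℝ) (hK : 2 ≤ K) : nuF K (4*(K-1)/K) - nuF K 0 = 1 := by
  have hK0 : (0:ℝ) < K := by linarith
  have hπ : π ≠ 0 := Real.pi_ne_zero
  rcases eq_or_lt_of_le hK with hK2 | hK2
  · subst hK2
    norm_num [nuF]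
    field_simp
    ring
  · set a : ℝ := 4*(K-1)/K with ha
    have haK4 : a * K = 4*(K-1) := by rw [ha]; field_simp
    have ha0 : 0 < a := div_pos (by linarith) hK0
    have hKa : a < K := by rw [ha, div_lt_iff₀ hK0]; nlinarith
    have e0 : nuF K 0 = K/(2*π) * (-(π/2) * (K - a/2) + (π/2) * (K-2)) := by
      rw [nuF, ← ha]
      rw [show a*0 - 0^2 = 0 by ring, Real.sqrt_zero,
        show 2*0/a - 1 = -1 by rw [mul_zero, zero_div]; ring,
        show ((2*K - a)*0 - K*a)/(a*(K-0)) = -1 by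
          rw [mul_zero, zero_sub, sub_zero, neg_div, mul_comm K a,
            div_self (by positivity)],
        Real.arcsin_neg_one]
      ring
    have ea : nuF K a = K/(2*π) * ((π/2) * (K - a/2) - (π/2) * (K-2)) := by
      rw [nuF, ← ha]
      rw [show a*a - a^2 = 0 by ring, Real.sqrt_zero,
        show 2*a/a - 1 = 1 by rw [mul_div_assoc, div_self (ne_of_gt ha0)]; ring,
        show ((2*K - a)*a - K*a)/(a*(K-a)) = 1 by
          rw [show (2*K - a)*a - K*a = a*(K-a) by ring, div_self (ne_of_gt (mul_pos ha0 (by linarith : (0:ℝ) < K - a)))],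
        Real.arcsin_one]
      ring
    rw [ea, e0]
    have : K/(2*π) * π * (2 - a/2) = 1 := by
      rw [show K/(2*π) * π * (2 - a/2) = K*(2 - a/2)/2 by field_simp]
      rw [div_eq_one_iff_eq (by norm_num)]
      nlinarith [haK4]
    nlinarith [this]

theorem nuF_contOn (K : ℝ) (hK : 2 ≤ K) :
    ContinuousOn (nuF K) (Set.Icc 0 (4*(K-1)/K)) := by
  have hK0 : (0:ℝ) < K := by linarith
  unfold nuF
  set a : ℝ := 4*(K-1)/K with ha
  have ha0 : 0 < a := div_pos (by linarith) hK0
  have haK : a ≤ K := by rw [ha, div_le_iff₀ hK0]; nlinarith [sq_nonneg (K-2)]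
  apply ContinuousOn.mul continuousOn_const
  apply ContinuousOn.sub
  · apply ContinuousOn.add
    · exact (Real.continuous_sqrt.comp
        ((continuous_const.mul continuous_id).sub (continuous_pow 2))).continuousOn.neg
    · exact (continuous_const.mul (Real.continuous_arcsin.comp
        (((continuous_const.mul continuous_id).div_const a).sub continuous_const))).continuousOn
  · rcases eq_or_lt_of_le hK with hK2 | hK2
    · have : (fun y : ℝ => (K - 2) * Real.arcsin (((2*K - a)*y - K*a)/(a*(K-y)))) = fun _ => 0 := by
        funext y; rw [← hK2]; ring
      rw [this]; exact continuousOn_const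
    · have hKa : a < K := by rw [ha, div_lt_iff₀ hK0]; nlinarith
      apply ContinuousOn.mul continuousOn_const
      apply Real.continuous_arcsin.comp_continuousOn
      apply ContinuousOn.div
      · exact ((continuous_const.mul continuous_id).sub continuous_const).continuousOn
      · exact (continuous_const.mul (continuous_const.sub continuous_id)).continuousOn
      · intro y hy
        have : y < K := lt_of_le_of_lt hy.2 hKa
        exact ne_of_gt (mul_pos ha0 (by linarith))

theorem nu_integrand_eq (K : ℝ) (hK : 2 ≤ K) {x : ℝ} (hx : x ∈ Set.Ioo (0:ℝ) (4*(K-1)/K)) :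
    x * ((1 / (2 * π)) * Real.sqrt (4 * K * (K - 1) * x - K ^ 2 * x ^ 2) / (K * x - x ^ 2))
      = K / (2*π) * (Real.sqrt (4*(K-1)/K*x - x^2) / (K - x)) := by
  obtain ⟨hx0, hxa⟩ := hx
  have hK0 : (0:ℝ) < K := by linarith
  set a : ℝ := 4*(K-1)/K with ha
  have haK : a ≤ K := by rw [ha, div_le_iff₀ hK0]; nlinarith [sq_nonneg (K-2)]
  have hxK : x < K := lt_of_lt_of_le hxa haK
  have harg : 4 * K * (K - 1) * x - K ^ 2 * x ^ 2 = K^2 * (a*x - x^2) := by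
    rw [ha]; field_simp
  rw [harg, Real.sqrt_mul (sq_nonneg K), Real.sqrt_sq hK0.le]
  rw [show K*x - x^2 = x*(K-x) by ring]
  have hπ : π ≠ 0 := Real.pi_ne_zero
  have hxne : x ≠ 0 := ne_of_gt hx0
  have hKxne : K - x ≠ 0 := ne_of_gt (by linarith)
  set s : ℝ := Real.sqrt (a*x - x^2) with hs
  field_simp

theorem nu_integrable (K : ℝ) (hK : 2 ≤ K) :
    IntervalIntegrable (fun x : ℝ =>
      x * ((1 / (2 * π)) * Real.sqrt (4 * K * (K - 1) * x - K ^ 2 * x ^ 2) / (K * x - x ^ 2)))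
      volume 0 (4*(K-1)/K) := by
  have hK0 : (0:ℝ) < K := by linarith
  set a : ℝ := 4*(K-1)/K with ha
  have ha0 : 0 < a := div_pos (by linarith) hK0
  have haK : a ≤ K := by rw [ha, div_le_iff₀ hK0]; nlinarith [sq_nonneg (K-2)]
  set C : ℝ := K/(2*π) * Real.sqrt a with hC
  have hC0 : 0 ≤ C := by rw [hC]; positivity
  have hbase : IntervalIntegrable (fun y : ℝ => y ^ (-(1/2) : ℝ)) volume 0 a :=
    intervalIntegral.intervalIntegrable_rpow' (by norm_num)
  have hcomp := (hbase.comp_sub_left a).symm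
  simp only [sub_zero, sub_self] at hcomp
  have hbound : IntervalIntegrable (fun y : ℝ => C * (a - y) ^ (-(1/2) : ℝ)) volume 0 a :=
    hcomp.const_mul C
  apply hbound.mono_fun
  · apply Measurable.aestronglyMeasurable
    fun_prop
  · rw [Set.uIoc_of_le ha0.le]
    refine (MeasureTheory.ae_restrict_mem measurableSet_Ioc).mono (fun x hx => ?_)
    dsimp only
    obtain ⟨hx0, hxa⟩ := hx
    have hrpow0 : (0:ℝ) ≤ (a - x) ^ (-(1/2) : ℝ) := Real.rpow_nonneg (by linarith) _
    have hR : ‖C * (a - x) ^ (-(1/2) : ℝ)‖ = C * (a - x) ^ (-(1/2) : ℝ) := by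
      rw [Real.norm_eq_abs, abs_of_nonneg (by positivity)]
    rcases eq_or_lt_of_le hxa with hxa' | hxa'
    · have harg : 4 * K * (K - 1) * x - K ^ 2 * x ^ 2 = 0 := by
        rw [hxa', ha]; field_simp; ring
      simp only [harg, Real.sqrt_zero, mul_zero, zero_div, mul_zero, zero_mul, div_zero]
      rw [hR]
      norm_num
      positivity
    · rw [nu_integrand_eq K hK ⟨hx0, hxa'⟩, ← ha, hR]
      have hxK : x < K := lt_of_lt_of_le hxa' haK
      have hax0 : 0 < a - x := by linarith
      have hsax : 0 < Real.sqrt (a - x) := Real.sqrt_pos.mpr hax0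
      have hs : Real.sqrt (a*x - x^2) = Real.sqrt x * Real.sqrt (a - x) := by
        rw [← Real.sqrt_mul hx0.le]; ring_nf
      have hrw : (a - x) ^ (-(1/2) : ℝ) = (Real.sqrt (a - x))⁻¹ := by
        rw [Real.rpow_neg hax0.le, Real.sqrt_eq_rpow]
      have t2 : Real.sqrt (a - x)/(K - x) ≤ (Real.sqrt (a - x))⁻¹ := by
        rw [inv_eq_one_div, div_le_div_iff₀ (by linarith) hsax]
        nlinarith [Real.mul_self_sqrt hax0.le]
      have t3 : Real.sqrt x ≤ Real.sqrt a := Real.sqrt_le_sqrt (by linarith)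
      have key : Real.sqrt (a*x - x^2)/(K - x) ≤ Real.sqrt a * (Real.sqrt (a - x))⁻¹ := by
        rw [hs, mul_div_assoc]
        exact mul_le_mul t3 t2 (div_nonneg (Real.sqrt_nonneg _) (by linarith)) (Real.sqrt_nonneg a)
      rw [Real.norm_eq_abs, abs_of_nonneg (mul_nonneg (by positivity)
        (div_nonneg (Real.sqrt_nonneg _) (by linarith))), hrw, hC]
      calc K/(2*π) * (Real.sqrt (a*x - x^2)/(K - x))
          ≤ K/(2*π) * (Real.sqrt a * (Real.sqrt (a - x))⁻¹) := by
            apply mul_le_mul_of_nonneg_left key (by positivity)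
        _ = K/(2*π) * Real.sqrt a * (Real.sqrt (a - x))⁻¹ := by ring

theorem nu_aux (K : ℝ) (hK : 2 ≤ K) :
    ∫ x in Set.Ioo (0:ℝ) (4 * (K - 1) / K),
      x * ((1 / (2 * π)) * Real.sqrt (4 * K * (K - 1) * x - K ^ 2 * x ^ 2)
        / (K * x - x ^ 2)) = 1 := by
  have hK0 : (0:ℝ) < K := by linarith
  have ha0 : (0:ℝ) < 4*(K-1)/K := div_pos (by linarith) hK0
  rw [← MeasureTheory.integral_Ioc_eq_integral_Ioo,
    ← intervalIntegral.integral_of_le (by linarith : (0:ℝ) ≤ 4*(K-1)/K)]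
  rw [intervalIntegral.integral_eq_sub_of_hasDeriv_right_of_le (by linarith)
    (by have := nuF_contOn K hK; convert this using 2 <;> ring)
    (fun x hx => by
      rw [nu_integrand_eq K hK (by convert hx using 2 <;> ring)]
      exact (nuF_hasDeriv K hK (by convert hx using 2 <;> ring)).hasDerivWithinAt)
    (by have := nu_integrable K hK; convert this using 2 <;> ring)]
  have := nuF_diff K hK
  convert this using 3 <;> ring

/-- For `k ≥ 2`, the first moment of the density `ν_k` equals 1. -/
theorem nu_k_first_moment (k : ℕ) (hk : 2 ≤ k) :
    ∫ x in Set.Ioo (0:ℝ) (4 * ((k:ℝ) - 1) / k),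
      x * ((1 / (2 * π)) * Real.sqrt (4 * k * ((k:ℝ) - 1) * x - (k:ℝ) ^ 2 * x ^ 2)
        / ((k:ℝ) * x - x ^ 2)) = 1 := by
  exact nu_aux (k:ℝ) (by exact_mod_cast hk)
end

section
/- The Bures asymptotic density P_B(x) = (1/(4π√3))·[ (a/x + √((a/x)² − 1))^{2/3} − (a/x − √((a/x)² − 1))^{2/3} ], with a = 3√3, integrates to 1 over (0, 3√3). -/
open Real MeasureTheory Set Filter Topology

noncomputable def PB (x : ℝ) : ℝ :=
  (1 / (4 * π * Real.sqrt 3)) *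
    (((3 * Real.sqrt 3) / x + Real.sqrt (((3 * Real.sqrt 3) / x) ^ 2 - 1)) ^ ((2:ℝ)/3)
      - ((3 * Real.sqrt 3) / x - Real.sqrt (((3 * Real.sqrt 3) / x) ^ 2 - 1)) ^ ((2:ℝ)/3))

noncomputable def gB (y : ℝ) : ℝ :=
  ((3 * Real.sqrt 3) / y - Real.sqrt (((3 * Real.sqrt 3) / y) ^ 2 - 1)) ^ ((1:ℝ)/3)

noncomputable def FB (y : ℝ) : ℝ :=
  (9 / (2 * π)) * ((2/3) * Real.arctan (gB y) + (2/9) * Real.arctan ((gB y)^3)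
    + (gB y - (gB y)^5) / (3 * (1 + (gB y)^6)))

set_option maxHeartbeats 2000000 in
lemma FB_hasDeriv {x : ℝ} (hx0 : 0 < x) (hxa : x < 3 * Real.sqrt 3) :
    HasDerivAt FB (PB x) x := by
  have ha0 : (0:ℝ) < 3 * Real.sqrt 3 := by positivity
  set u : ℝ := 3 * Real.sqrt 3 / x with hu
  have hu1 : 1 < u := (one_lt_div hx0).2 hxa
  have hd : 0 < u ^ 2 - 1 := by nlinarith
  set s : ℝ := Real.sqrt (u ^ 2 - 1) with hs
  have hs0 : 0 < s := Real.sqrt_pos.2 hd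
  have hs2 : s ^ 2 = u ^ 2 - 1 := Real.sq_sqrt hd.le
  have hsu : s < u := by nlinarith
  set v : ℝ := u - s with hv
  have hv0 : 0 < v := by simp [hv]; linarith
  have hvmul : v * (u + s) = 1 := by rw [hv]; nlinarith
  have hv1 : v < 1 := by nlinarith
  set T : ℝ := v ^ ((1:ℝ)/3) with hT
  have hT0 : 0 < T := Real.rpow_pos_of_pos hv0 _
  have hT3 : T ^ 3 = v := by
    rw [hT, ← Real.rpow_natCast (v ^ ((1:ℝ)/3)) 3, ← Real.rpow_mul hv0.le]
    norm_num
  have hT1 : T < 1 := by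
    by_contra h
    push_neg at h
    have : (1:ℝ) ≤ T ^ 3 := one_le_pow₀ h
    linarith
  have hxne : x ≠ 0 := hx0.ne'
  have hsne : s ≠ 0 := hs0.ne'
  have hvne : u - s ≠ 0 := by rw [← hv]; exact hv0.ne'
  have h1 : HasDerivAt (fun y : ℝ => 3 * Real.sqrt 3 / y) (3 * Real.sqrt 3 * (-(x^2)⁻¹)) x := by
    simpa [div_eq_mul_inv] using (hasDerivAt_inv hx0.ne').const_mul (3 * Real.sqrt 3)
  have h2 := (h1.pow 2).sub_const 1
  have h3 := h2.sqrt hd.ne'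
  have h4 := h1.sub h3
  have h5 := h4.rpow_const (p := (1:ℝ)/3) (Or.inl hvne)
  have hpow : (u - s) ^ ((1:ℝ)/3 - 1) = T / v := by
    rw [← hv, Real.rpow_sub hv0, Real.rpow_one, ← hT]
  have hg : HasDerivAt gB (3 * Real.sqrt 3 * T / (3 * x^2 * s)) x := by
    unfold gB
    convert h5 using 1
    · rfl
    simp only [Pi.sub_apply, Pi.pow_apply]
    rw [← hu, ← hs, hpow, hv]
    field_simp
    ring
  have hgx : gB x = T := by unfold gB; rw [← hu, ← hs, ← hv, ← hT]
  have hA := hg.arctan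
  have hB := (hg.pow 3).arctan
  have hnum := hg.sub (hg.pow 5)
  have hden := ((hg.pow 6).const_add 1).const_mul (3:ℝ)
  have hd0 : 3 * (1 + gB x ^ 6) ≠ 0 := by rw [hgx]; positivity
  have hC := hnum.div hden hd0
  have hsum := ((hA.const_mul ((2:ℝ)/3)).add (hB.const_mul ((2:ℝ)/9))).add hC
  have hF := hsum.const_mul ((9:ℝ)/(2*π))
  have hFB : HasDerivAt FB (9 / (2 * π) *
      (2 / 3 * (1 / (1 + gB x ^ 2) * (3 * Real.sqrt 3 * T / (3 * x ^ 2 * s))) +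
        2 / 9 * (1 / (1 + (gB x ^ 3) ^ 2) * (↑3 * gB x ^ (3-1) * (3 * Real.sqrt 3 * T / (3 * x ^ 2 * s)))) +
        ((3 * Real.sqrt 3 * T / (3 * x ^ 2 * s) - ↑5 * gB x ^ (5-1) * (3 * Real.sqrt 3 * T / (3 * x ^ 2 * s))) * (3 * (1 + gB x ^ 6)) -
            (gB x - gB x ^ 5) * (3 * (↑6 * gB x ^ (6-1) * (3 * Real.sqrt 3 * T / (3 * x ^ 2 * s))))) /
          (3 * (1 + gB x ^ 6)) ^ 2)) x := hF
  have h6 : T ^ 6 = v ^ 2 := by rw [← hT3]; ring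
  have hv23 : v ^ ((2:ℝ)/3) = T ^ 2 := by
    rw [show ((2:ℝ)/3) = (1/3) * 2 by norm_num, Real.rpow_mul hv0.le, ← hT,
      show (2:ℝ) = ((2:ℕ):ℝ) by norm_num, Real.rpow_natCast]
  have husv : u + s = 1 / v := eq_one_div_of_mul_eq_one_right hvmul
  have hms : (u - s) ^ ((2:ℝ)/3) = T ^ 2 := by rw [← hv]; exact hv23
  have hps : (u + s) ^ ((2:ℝ)/3) = 1 / T ^ 2 := by
    rw [husv, one_div, Real.inv_rpow hv0.le, hv23, one_div]
  have hux : u * x = 3 * Real.sqrt 3 := by rw [hu]; field_simp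
  have hs_eq : s = u - v := by rw [hv]; ring
  have h2u : 2 * u * v = v ^ 2 + 1 := by rw [hv]; linear_combination -hs2
  have hx' : x = 2 * (3 * Real.sqrt 3) * T ^ 3 / (1 + T ^ 6) := by
    rw [eq_div_iff (by positivity), hT3, h6]
    linear_combination (-x) * h2u + (2 * v) * hux
  have hs' : s = (1 - T ^ 6) / (2 * T ^ 3) := by
    rw [eq_div_iff (by positivity), hT3, h6]
    linear_combination 2 * v * hs_eq + h2u
  have hT6 : (1:ℝ) - T ^ 6 ≠ 0 := by
    have : T ^ 6 < 1 := by
      calc T ^ 6 ≤ T ^ 1 := pow_le_pow_of_le_one hT0.le hT1.le (by norm_num)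
      _ < 1 := by rwa [pow_one]
    linarith
  have hT6' : (1:ℝ) + T ^ 6 ≠ 0 := by positivity
  have hTne : T ≠ 0 := hT0.ne'
  have hpi : π ≠ 0 := Real.pi_ne_zero
  have hrt3 : Real.sqrt 3 ≠ 0 := by positivity
  convert hFB using 1
  rw [hgx]
  unfold PB
  rw [← hu, ← hs, hps, hms, hx', hs']
  field_simp
  ring

lemma FB_tendsto_one : Tendsto FB (𝓝[<] (3 * Real.sqrt 3)) (𝓝 1) := by
  have ha0 : (0:ℝ) < 3 * Real.sqrt 3 := by positivity
  have hga : gB (3 * Real.sqrt 3) = 1 := by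
    unfold gB
    rw [div_self ha0.ne']
    norm_num
  have h1 : ContinuousAt (fun y : ℝ => 3 * Real.sqrt 3 / y) (3 * Real.sqrt 3) :=
    continuousAt_const.div continuousAt_id ha0.ne'
  have h3 : ContinuousAt (fun y : ℝ => Real.sqrt ((3 * Real.sqrt 3 / y) ^ 2 - 1)) (3 * Real.sqrt 3) :=
    Real.continuous_sqrt.continuousAt.comp ((h1.pow 2).sub continuousAt_const)
  have hgc : ContinuousAt gB (3 * Real.sqrt 3) :=
    (h1.sub h3).rpow_const (Or.inr (by norm_num))
  have hc1 : ContinuousAt (fun y => Real.arctan (gB y)) (3 * Real.sqrt 3) :=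
    Real.continuous_arctan.continuousAt.comp hgc
  have hc2 : ContinuousAt (fun y => Real.arctan ((gB y) ^ 3)) (3 * Real.sqrt 3) :=
    Real.continuous_arctan.continuousAt.comp (hgc.pow 3)
  have hd0 : 3 * (1 + gB (3 * Real.sqrt 3) ^ 6) ≠ 0 := by rw [hga]; norm_num
  have hc3 : ContinuousAt (fun y => (gB y - (gB y)^5) / (3 * (1 + (gB y)^6))) (3 * Real.sqrt 3) :=
    (hgc.sub (hgc.pow 5)).div (continuousAt_const.mul (continuousAt_const.add (hgc.pow 6))) hd0
  have hFc : ContinuousAt FB (3 * Real.sqrt 3) :=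
    continuousAt_const.mul (((continuousAt_const.mul hc1).add (continuousAt_const.mul hc2)).add hc3)
  have hval : FB (3 * Real.sqrt 3) = 1 := by
    unfold FB
    rw [hga]
    rw [one_pow, one_pow, one_pow, Real.arctan_one]
    have hpi : π ≠ 0 := Real.pi_ne_zero
    field_simp
    ring
  have h := hFc.continuousWithinAt (s := Set.Iio (3 * Real.sqrt 3))
  rw [ContinuousWithinAt, hval] at h
  exact h

lemma FB_tendsto_zero : Tendsto FB (𝓝[>] (0:ℝ)) (𝓝 0) := by
  have ha0 : (0:ℝ) < 3 * Real.sqrt 3 := by positivity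
  have key : ∀ y ∈ Set.Ioo (0:ℝ) (3 * Real.sqrt 3),
      0 ≤ gB y ∧ gB y ≤ (y / (3 * Real.sqrt 3)) ^ ((1:ℝ)/3) := by
    intro y hy
    obtain ⟨hy0, hya⟩ := hy
    set u : ℝ := 3 * Real.sqrt 3 / y with hu
    have hu1 : 1 < u := (one_lt_div hy0).2 hya
    have hd : 0 < u ^ 2 - 1 := by nlinarith
    set s : ℝ := Real.sqrt (u ^ 2 - 1) with hs
    have hs0 : 0 < s := Real.sqrt_pos.2 hd
    have hs2 : s ^ 2 = u ^ 2 - 1 := Real.sq_sqrt hd.le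
    have hsu : s < u := by nlinarith
    have hgy : gB y = (u - s) ^ ((1:ℝ)/3) := by unfold gB; rw [← hu, ← hs]
    have hv0 : (0:ℝ) < u - s := by linarith
    have hvle : u - s ≤ y / (3 * Real.sqrt 3) := by
      have hmul : (u - s) * (u + s) = 1 := by nlinarith
      have h1 : u - s = 1 / (u + s) := by
        rw [eq_div_iff (by positivity)]; exact hmul
      have h2 : 1 / (u + s) ≤ 1 / u := by
        apply one_div_le_one_div_of_le (by linarith) (by linarith)
      have h3 : 1 / u = y / (3 * Real.sqrt 3) := by
        rw [hu, one_div_div]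
      linarith
    constructor
    · rw [hgy]; exact Real.rpow_nonneg hv0.le _
    · rw [hgy]; exact Real.rpow_le_rpow hv0.le hvle (by norm_num)
  have hg0 : Tendsto gB (𝓝[>] (0:ℝ)) (𝓝 0) := by
    have hmem : Set.Ioo (0:ℝ) (3 * Real.sqrt 3) ∈ 𝓝[>] (0:ℝ) :=
      Ioo_mem_nhdsGT_of_mem ⟨le_refl 0, ha0⟩
    apply squeeze_zero'
    · filter_upwards [hmem] with y hy using (key y hy).1
    · filter_upwards [hmem] with y hy using (key y hy).2
    · have l1 : Tendsto (fun y : ℝ => y / (3 * Real.sqrt 3)) (𝓝[>] (0:ℝ)) (𝓝 0) := by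
        have h := (continuous_id.div_const (3 * Real.sqrt 3)).tendsto 0
        simpa using h.mono_left nhdsWithin_le_nhds
      have l2 : ContinuousAt (fun z : ℝ => z ^ ((1:ℝ)/3)) 0 :=
        Real.continuousAt_rpow_const 0 _ (Or.inr (by norm_num))
      have h := l2.tendsto.comp l1
      rwa [Real.zero_rpow (by norm_num)] at h
  have hHc : ContinuousAt (fun t : ℝ => (9 / (2 * π)) * ((2/3) * Real.arctan t
      + (2/9) * Real.arctan (t^3) + (t - t^5) / (3 * (1 + t^6)))) 0 := by
    apply continuousAt_const.mul
    apply ContinuousAt.add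
    apply ContinuousAt.add
    · exact continuousAt_const.mul Real.continuous_arctan.continuousAt
    · exact continuousAt_const.mul
        (Real.continuous_arctan.continuousAt.comp (continuousAt_id.pow 3))
    · exact (continuousAt_id.sub (continuousAt_id.pow 5)).div
        (continuousAt_const.mul (continuousAt_const.add (continuousAt_id.pow 6)))
        (by norm_num)
  have h := hHc.tendsto.comp hg0
  try simp only [Function.comp] at h
  have hval : (9 / (2 * π)) * ((2/3) * Real.arctan 0 + (2/9) * Real.arctan ((0:ℝ)^3)
      + ((0:ℝ) - 0^5) / (3 * (1 + 0^6))) = 0 := by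
    simp [Real.arctan_zero]
  rw [hval] at h
  exact h

lemma PB_integrable : IntervalIntegrable PB volume 0 (3 * Real.sqrt 3) := by
  have ha0 : (0:ℝ) < 3 * Real.sqrt 3 := by positivity
  have hbase : IntervalIntegrable
      (fun y : ℝ => (1 / (4 * π * Real.sqrt 3) * (2 * (3 * Real.sqrt 3)) ^ ((2:ℝ)/3)) * y ^ (-((2:ℝ)/3)))
      volume 0 (3 * Real.sqrt 3) :=
    (intervalIntegral.intervalIntegrable_rpow' (by norm_num)).const_mul _
  apply hbase.mono_fun'
  · -- measurability
    rw [Set.uIoc_of_le ha0.le]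
    apply ContinuousOn.aestronglyMeasurable _ measurableSet_Ioc
    intro y hy
    have hy0 : (0:ℝ) < y := hy.1
    have h1 : ContinuousAt (fun z : ℝ => 3 * Real.sqrt 3 / z) y :=
      continuousAt_const.div continuousAt_id hy0.ne'
    have h2 : ContinuousAt (fun z : ℝ => (3 * Real.sqrt 3 / z) ^ 2 - 1) y :=
      (h1.pow 2).sub continuousAt_const
    have h3 : ContinuousAt (fun z : ℝ => Real.sqrt ((3 * Real.sqrt 3 / z) ^ 2 - 1)) y :=
      Real.continuous_sqrt.continuousAt.comp h2
    have h4 : ContinuousAt PB y :=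
      continuousAt_const.mul
        (((h1.add h3).rpow_const (Or.inr (by norm_num))).sub
          ((h1.sub h3).rpow_const (Or.inr (by norm_num))))
    exact h4.continuousWithinAt
  · -- bound
    rw [Set.uIoc_of_le ha0.le]
    filter_upwards [ae_restrict_mem measurableSet_Ioc] with y hy
    obtain ⟨hy0, hya⟩ := hy
    set u : ℝ := 3 * Real.sqrt 3 / y with hu
    have hu1 : 1 ≤ u := (one_le_div hy0).2 hya
    have hd : 0 ≤ u ^ 2 - 1 := by nlinarith
    set s : ℝ := Real.sqrt (u ^ 2 - 1) with hs
    have hs0 : 0 ≤ s := Real.sqrt_nonneg _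
    have hs2 : s ^ 2 = u ^ 2 - 1 := Real.sq_sqrt hd
    have hsu : s ≤ u := by nlinarith
    have hk : (0:ℝ) < 1 / (4 * π * Real.sqrt 3) := by positivity
    have hPB : PB y = (1 / (4 * π * Real.sqrt 3)) * ((u + s) ^ ((2:ℝ)/3) - (u - s) ^ ((2:ℝ)/3)) := by
      unfold PB; rw [← hu, ← hs]
    have hnn : 0 ≤ (u + s) ^ ((2:ℝ)/3) - (u - s) ^ ((2:ℝ)/3) := by
      have := Real.rpow_le_rpow (by linarith : (0:ℝ) ≤ u - s) (by linarith : u - s ≤ u + s)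
        (by norm_num : (0:ℝ) ≤ (2:ℝ)/3)
      linarith
    have hPBnn : 0 ≤ PB y := by rw [hPB]; positivity
    rw [Real.norm_eq_abs, abs_of_nonneg hPBnn, hPB]
    have hle1 : (u + s) ^ ((2:ℝ)/3) - (u - s) ^ ((2:ℝ)/3) ≤ (2 * u) ^ ((2:ℝ)/3) := by
      have h1 : (u + s) ^ ((2:ℝ)/3) ≤ (2 * u) ^ ((2:ℝ)/3) :=
        Real.rpow_le_rpow (by linarith) (by linarith) (by norm_num)
      have h2 : 0 ≤ (u - s) ^ ((2:ℝ)/3) := Real.rpow_nonneg (by linarith) _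
      linarith
    have heq : (2 * u) ^ ((2:ℝ)/3) = (2 * (3 * Real.sqrt 3)) ^ ((2:ℝ)/3) * y ^ (-((2:ℝ)/3)) := by
      have : 2 * u = (2 * (3 * Real.sqrt 3)) / y := by rw [hu]; ring
      rw [this, Real.div_rpow (by positivity) hy0.le, Real.rpow_neg hy0.le, div_eq_mul_inv]
    calc 1 / (4 * π * Real.sqrt 3) * ((u + s) ^ ((2:ℝ)/3) - (u - s) ^ ((2:ℝ)/3))
        ≤ 1 / (4 * π * Real.sqrt 3) * ((2 * u) ^ ((2:ℝ)/3)) := by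
          apply mul_le_mul_of_nonneg_left hle1 hk.le
      _ = 1 / (4 * π * Real.sqrt 3) * (2 * (3 * Real.sqrt 3)) ^ ((2:ℝ)/3) * y ^ (-((2:ℝ)/3)) := by
          rw [heq]; ring

/-- The Bures asymptotic density integrates to 1 over `(0, 3√3)`. -/
theorem bures_density_integrates_to_one :
    ∫ x in Set.Ioo (0:ℝ) (3 * Real.sqrt 3),
      (1 / (4 * π * Real.sqrt 3)) *
        (((3 * Real.sqrt 3) / x
            + Real.sqrt (((3 * Real.sqrt 3) / x) ^ 2 - 1)) ^ ((2:ℝ)/3)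
          - ((3 * Real.sqrt 3) / x
            - Real.sqrt (((3 * Real.sqrt 3) / x) ^ 2 - 1)) ^ ((2:ℝ)/3)) = 1 := by
  have ha0 : (0:ℝ) < 3 * Real.sqrt 3 := by positivity
  have h := intervalIntegral.integral_eq_sub_of_hasDerivAt_of_tendsto (f := FB) (f' := PB) ha0
    (fun x hx => FB_hasDeriv hx.1 hx.2) PB_integrable FB_tendsto_zero FB_tendsto_one
  show (∫ x in Set.Ioo (0:ℝ) (3 * Real.sqrt 3), PB x) = 1
  rw [← MeasureTheory.integral_Ioc_eq_integral_Ioo, ← intervalIntegral.integral_of_le ha0.le, h]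
  norm_num
end
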